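/- Let L ≤_q G be a q-normal subgroup. Define the graph Ω with vertex set V = {gLg⁻¹ : g ∈ G} and edge set consisting of pairs {g₁Lg₁⁻¹, g₂Lg₂⁻¹} of distinct conjugates whose intersection is infinite. Then Ω is connected. -/

import Mathlib

/-- The conjugate subgroup `g L g⁻¹`. -/
def conjSubgroup {G : Type*} [Group G] (g : G) (L : Subgroup G) : Subgroup G :=
  Subgroup.map (MulAut.conj g).toMonoidHom L

def conjSet {G : Type*} [Group G] (s : G) (A : Set G) : Set G :=
  (fun x => s * x * s⁻¹) '' A

def IsQNormal {G : Type*} [Group G] (H : Subgroup G) : Prop :=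
  ∃ S : Set G, Subgroup.closure S = ⊤ ∧
    ∀ s ∈ S, (conjSet s (H : Set G) ∩ (H : Set G)).Infinite

section Aux

variable {G : Type*} [Group G]

lemma myConjInj (g : G) : Function.Injective (fun x : G => g * x * g⁻¹) := by
  intro a b h
  simp only at h
  have := mul_right_cancel h
  exact mul_left_cancel this

lemma conjSubgroup_coe (g : G) (L : Subgroup G) :
    ((conjSubgroup g L : Subgroup G) : Set G) = conjSet g (L : Set G) := by
  simp only [conjSubgroup, Subgroup.coe_map, conjSet]
  rfl

lemma conjSubgroup_one (L : Subgroup G) : conjSubgroup 1 L = L := by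
  ext x
  simp [conjSubgroup]

lemma conjSubgroup_mul (g h : G) (L : Subgroup G) :
    conjSubgroup g (conjSubgroup h L) = conjSubgroup (g * h) L := by
  unfold conjSubgroup
  rw [Subgroup.map_map]
  congr 1
  ext x
  simp [mul_assoc]

lemma conjSet_inter (g : G) (A B : Set G) :
    conjSet g (A ∩ B) = conjSet g A ∩ conjSet g B := by
  unfold conjSet
  exact Set.image_inter (myConjInj g)

lemma conjSet_infinite {A : Set G} (g : G) (h : A.Infinite) : (conjSet g A).Infinite :=
  h.image (Set.injOn_of_injective (myConjInj g))

lemma conjSubgroup_injective (g : G) :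
    Function.Injective (fun L : Subgroup G => conjSubgroup g L) := by
  intro A B h
  have : conjSubgroup g⁻¹ (conjSubgroup g A) = conjSubgroup g⁻¹ (conjSubgroup g B) := by
    simp only at h; rw [h]
  rwa [conjSubgroup_mul, conjSubgroup_mul, inv_mul_cancel, conjSubgroup_one,
    conjSubgroup_one] at this

end Aux

/-- If `L ≤_q G`, the graph whose vertices are the conjugates of `L`, with an edge
between two distinct conjugates whenever their intersection is infinite, is
connected. -/
theorem conjugates_graph_connected
    {G : Type*} [Group G] (L : Subgroup G) (hq : IsQNormal L) :
    ∀ g : G,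
      Relation.ReflTransGen
        (fun A B : Subgroup G =>
          (∃ g₁ : G, A = conjSubgroup g₁ L) ∧ (∃ g₂ : G, B = conjSubgroup g₂ L) ∧
          A ≠ B ∧ ((A : Set G) ∩ (B : Set G)).Infinite)
        L (conjSubgroup g L) := by
  obtain ⟨S, hS, hinf⟩ := hq
  set R : Subgroup G → Subgroup G → Prop := fun A B =>
    (∃ g₁ : G, A = conjSubgroup g₁ L) ∧ (∃ g₂ : G, B = conjSubgroup g₂ L) ∧
      A ≠ B ∧ ((A : Set G) ∩ (B : Set G)).Infinite with hR
  have hRsymm : Symmetric R := by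
    rintro A B ⟨h1, h2, h3, h4⟩
    exact ⟨h2, h1, h3.symm, by rwa [Set.inter_comm]⟩
  have hRconj : ∀ (g : G) (A B : Subgroup G), R A B →
      R (conjSubgroup g A) (conjSubgroup g B) := by
    rintro g A B ⟨⟨g₁, h1⟩, ⟨g₂, h2⟩, h3, h4⟩
    refine ⟨⟨g * g₁, by rw [h1, conjSubgroup_mul]⟩,
      ⟨g * g₂, by rw [h2, conjSubgroup_mul]⟩,
      fun h => h3 (conjSubgroup_injective g h), ?_⟩
    rw [conjSubgroup_coe, conjSubgroup_coe, ← conjSet_inter]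
    exact conjSet_infinite g h4
  -- key: path from L to conjSubgroup g L
  have main : ∀ g : G, Relation.ReflTransGen R L (conjSubgroup g L) := by
    intro g
    have hg : g ∈ Subgroup.closure S := by rw [hS]; trivial
    induction hg using Subgroup.closure_induction with
    | mem s hs =>
      by_cases hne : conjSubgroup s L = L
      · rw [hne]
      · refine Relation.ReflTransGen.single ?_
        refine ⟨⟨1, (conjSubgroup_one L).symm⟩, ⟨s, rfl⟩, fun h => hne h.symm, ?_⟩
        have := hinf s hs
        rw [conjSubgroup_coe, Set.inter_comm]
        exact this
    | one => rw [conjSubgroup_one]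
    | mul x y hx hy px py =>
        have lifted : Relation.ReflTransGen R (conjSubgroup x L)
            (conjSubgroup x (conjSubgroup y L)) :=
          Relation.ReflTransGen.lift (p := R) (fun A => conjSubgroup x A)
            (fun a b h => hRconj x a b h) _ _ py
        rw [conjSubgroup_mul] at lifted
        exact px.trans lifted
    | inv x hx px =>
        have lifted : Relation.ReflTransGen R (conjSubgroup x⁻¹ L)
            (conjSubgroup x⁻¹ (conjSubgroup x L)) :=
          Relation.ReflTransGen.lift (p := R) (fun A => conjSubgroup x⁻¹ A)
            (fun a b h => hRconj x⁻¹ a b h) _ _ px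
        rw [conjSubgroup_mul, inv_mul_cancel, conjSubgroup_one] at lifted
        exact (@Relation.ReflTransGen.stdSymm _ R ⟨fun a b h => hRsymm h⟩).symm _ _ lifted
  exact main
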